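/- Let d ≥ 1, k ≥ 2, and suppose {φ_{A,a}}_{a=0}^{d-1} (A = 0,…,k−1) are k mutually unbiased orthonormal bases of ℂ^d. Define vectors Φ_{A,a} in EuclideanSpace ℂ (Fin d^{k−1} × Fin d) by Φ_{A,a}(i,j) = conj(φ_{A,a}(i))·φ_{A,a}(j) for i < d and Φ_{A,a}(i,j) = 0 for i ≥ d. Then there exist a function s : Fin d^k → Fin k → Fin d and an orthonormal basis (e_I)_{I ∈ Fin d^k} of EuclideanSpace ℂ (Fin d^{k−1} × Fin d) such that ⟨e_I, Φ_{A,a}⟩ = 0 whenever s(I)(A) ≠ a. In other words, the Mean King's problem with k mutually unbiased bases has a solution for every level d. -/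

import Mathlib

open scoped InnerProductSpace

open Complex Finset
open scoped InnerProductSpace

namespace MeanKingAux

lemma cs_aux {d : ℕ} {x : ℂ} (hx : x ^ d = 1) :
    ∑ a : Fin d, x ^ (a : ℕ) = if x = 1 then (d : ℂ) else 0 := by
  split_ifs with h
  · simp [h]
  · rw [Fin.sum_univ_eq_sum_range, geom_sum_eq h, hx]; simp

lemma cs' {d : ℕ} {ζ : ℂ} (hd : 1 ≤ d) (hζ : IsPrimitiveRoot ζ d) (b c : Fin d) :
    ∑ a : Fin d, ζ ^ ((b : ℕ) * (a : ℕ)) * (ζ ^ ((c : ℕ) * (a : ℕ)))⁻¹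
      = if b = c then (d : ℂ) else 0 := by
  have hζ0 : ζ ≠ 0 := by
    intro h
    have := hζ.pow_eq_one
    rw [h] at this
    rw [zero_pow (by omega : d ≠ 0)] at this
    exact zero_ne_one this
  have hterm : ∀ a : Fin d,
      ζ ^ ((b : ℕ) * (a : ℕ)) * (ζ ^ ((c : ℕ) * (a : ℕ)))⁻¹
        = (ζ ^ (b : ℕ) * (ζ ^ (c : ℕ))⁻¹) ^ (a : ℕ) := by
    intro a
    rw [mul_pow, pow_mul, pow_mul, inv_pow]
  simp only [hterm]
  have hx : (ζ ^ (b : ℕ) * (ζ ^ (c : ℕ))⁻¹) ^ d = 1 := by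
    rw [mul_pow, inv_pow, ← pow_mul, ← pow_mul, mul_comm (b : ℕ) d, mul_comm (c : ℕ) d,
      pow_mul, pow_mul, hζ.pow_eq_one, one_pow, one_pow]
    simp
  rw [cs_aux hx]
  congr 1
  rw [eq_iff_iff]
  constructor
  · intro h
    have : ζ ^ (b : ℕ) = ζ ^ (c : ℕ) := by
      field_simp at h
      exact h
    exact Fin.val_injective (hζ.pow_inj b.isLt c.isLt this)
  · intro h; subst h; field_simp

variable {d k n : ℕ}

noncomputable def Psi (ζ : ℂ) (Φ : Fin k → Fin d → EuclideanSpace ℂ (Fin n × Fin d))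
    (A : Fin k) (b : Fin d) : EuclideanSpace ℂ (Fin n × Fin d) :=
  ∑ a : Fin d, ζ ^ ((b : ℕ) * (a : ℕ)) • Φ A a

section
variable [NeZero d]

variable {ζ : ℂ} {Φ : Fin k → Fin d → EuclideanSpace ℂ (Fin n × Fin d)}
  (hd : 1 ≤ d) (hζ : IsPrimitiveRoot ζ d)
  (habs : ∀ m : ℕ, (starRingEnd ℂ) (ζ ^ m) = (ζ ^ m)⁻¹)
  (hI : ∀ (A : Fin k) (a : Fin d) (A' : Fin k) (a' : Fin d),
    ⟪Φ A a, Φ A' a'⟫_ℂ = if A = A' then (if a = a' then 1 else 0) else ((d : ℂ))⁻¹)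

include hd hζ habs hI in
lemma inner_Psi (A A' : Fin k) (b b' : Fin d) :
    ⟪Psi ζ Φ A b, Psi ζ Φ A' b'⟫_ℂ
      = if b = b' ∧ (A = A' ∨ b = 0) then (d : ℂ) else 0 := by
  have hsum0 : ∀ c : Fin d, ∑ a : Fin d, (ζ ^ ((c : ℕ) * (a : ℕ)))⁻¹
      = if c = 0 then (d : ℂ) else 0 := by
    intro c
    have := cs' hd hζ 0 c
    simp only [Fin.val_zero, zero_mul, pow_zero, one_mul] at this
    rw [this]
    simp [eq_comm]
  have hsum1 : ∀ c : Fin d, ∑ a : Fin d, ζ ^ ((c : ℕ) * (a : ℕ))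
      = if c = 0 then (d : ℂ) else 0 := by
    intro c
    have := cs' hd hζ c 0
    simp only [Fin.val_zero, zero_mul, pow_zero, inv_one, mul_one] at this
    rw [this]
  simp only [Psi, sum_inner, inner_smul_left, inner_sum, inner_smul_right, hI, habs]
  by_cases hAA : A = A'
  · subst hAA
    simp only [if_true, mul_ite, mul_one, mul_zero, Finset.sum_ite_eq', Finset.mem_univ,
      if_true]
    rw [cs' hd hζ b' b]
    by_cases hbb : b = b'
    · subst hbb; simp
    · rw [if_neg (fun h : b' = b => hbb h.symm), if_neg (fun h => hbb h.1)]
  · have hd0 : (d : ℂ) ≠ 0 := Nat.cast_ne_zero.mpr (by omega)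
    simp only [if_neg hAA]
    simp only [← Finset.sum_mul]
    rw [hsum0 b, hsum1 b']
    by_cases hb : b = 0 <;> by_cases hb' : b' = 0
    · subst hb; subst hb'
      simp only [if_pos rfl, if_pos (And.intro rfl (Or.inr (rfl : (0 : Fin d) = 0)))]
      field_simp
      simp only [↓reduceIte, true_and, or_true]
      ring
    · rw [if_pos hb, if_neg hb', if_neg (fun h => hb' (h.1.symm.trans hb))]
      ring
    · rw [if_pos hb', if_neg hb, if_neg (fun h => hb (h.1.trans hb'))]
      ring
    · rw [if_neg hb, if_neg hb', if_neg (fun h => h.2.elim hAA hb)]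
      ring

include hd hζ in
lemma Phi_expand (A : Fin k) (a : Fin d) :
    Φ A a = ∑ b : Fin d, ((((d : ℂ))⁻¹ * (ζ ^ ((b : ℕ) * (a : ℕ)))⁻¹) • Psi ζ Φ A b) := by
  have hd0 : (d : ℂ) ≠ 0 := Nat.cast_ne_zero.mpr (by omega)
  simp only [Psi, Finset.smul_sum, smul_smul]
  rw [Finset.sum_comm]
  have key : ∀ a' : Fin d,
      ∑ b : Fin d, (((d : ℂ))⁻¹ * (ζ ^ ((b : ℕ) * (a : ℕ)))⁻¹ * ζ ^ ((b : ℕ) * ((a' : ℕ)))) • Φ A a'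
      = (if a' = a then (1 : ℂ) else 0) • Φ A a' := by
    intro a'
    rw [← Finset.sum_smul]
    congr 1
    have harr : ∀ b : Fin d, ((d : ℂ))⁻¹ * (ζ ^ ((b : ℕ) * (a : ℕ)))⁻¹ * ζ ^ ((b : ℕ) * ((a' : ℕ)))
        = (ζ ^ ((a' : ℕ) * (b : ℕ)) * (ζ ^ ((a : ℕ) * (b : ℕ)))⁻¹) * ((d : ℂ))⁻¹ := by
      intro b
      rw [mul_comm (b : ℕ) (a' : ℕ), mul_comm (b : ℕ) (a : ℕ)]
      ring
    rw [Finset.sum_congr rfl fun b _ => harr b, ← Finset.sum_mul, cs' hd hζ a' a]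
    by_cases h : a' = a
    · rw [if_pos h, if_pos h, mul_inv_cancel₀ hd0]
    · rw [if_neg h, if_neg h, zero_mul]
  rw [Finset.sum_congr rfl fun a' _ => key a']
  simp

end

end MeanKingAux

open MeanKingAux

/-- **The Mean King's problem always has a solution.**
Given `k` mutually unbiased orthonormal bases of `ℂ^d`, there exist an estimation
function `s` and an orthonormal basis of `ℂ^{d^{k-1}} ⊗ ℂ^d` satisfying the survival
condition. -/
theorem mean_king_problem_has_solution
    (d k : ℕ) (hd : 1 ≤ d) (hk : 2 ≤ k)
    (φ : Fin k → OrthonormalBasis (Fin d) ℂ (EuclideanSpace ℂ (Fin d)))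
    (hMUB : ∀ A A' : Fin k, A ≠ A' → ∀ a a' : Fin d,
      ‖(⟪φ A a, φ A' a'⟫_ℂ)‖ ^ 2 = 1 / (d : ℝ))
    (Φ : Fin k → Fin d → EuclideanSpace ℂ (Fin (d ^ (k - 1)) × Fin d))
    (hΦ : ∀ (A : Fin k) (a : Fin d) (i : Fin (d ^ (k - 1))) (j : Fin d),
      Φ A a (i, j) =
        if h : (i : ℕ) < d then (starRingEnd ℂ) (φ A a ⟨i, h⟩) * φ A a j else 0) :
    ∃ (s : Fin (d ^ k) → Fin k → Fin d)
      (e : OrthonormalBasis (Fin (d ^ k)) ℂ (EuclideanSpace ℂ (Fin (d ^ (k - 1)) × Fin d))),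
      ∀ (I : Fin (d ^ k)) (A : Fin k) (a : Fin d),
        s I A ≠ a → ⟪e I, Φ A a⟫_ℂ = 0 := by
  haveI : NeZero d := ⟨by omega⟩
  have hd0 : (d : ℂ) ≠ 0 := Nat.cast_ne_zero.mpr (by omega)
  -- the root of unity
  set ζ : ℂ := Complex.exp (2 * Real.pi * Complex.I / d) with hζdef
  have hζ : IsPrimitiveRoot ζ d := Complex.isPrimitiveRoot_exp d (by omega)
  have habs : ∀ m : ℕ, (starRingEnd ℂ) (ζ ^ m) = (ζ ^ m)⁻¹ := by
    intro m
    have h1 : ‖ζ‖ = 1 := by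
      have hform : ζ = Complex.exp (((2 * Real.pi / d : ℝ) : ℂ) * Complex.I) := by
        rw [hζdef]; congr 1; push_cast; ring
      rw [hform]
      exact Complex.norm_exp_ofReal_mul_I _
    have : ‖ζ ^ m‖ = 1 := by rw [norm_pow, h1, one_pow]
    rw [Complex.inv_eq_conj this]
  -- inner products of the Φ's
  have hIP : ∀ (A : Fin k) (a : Fin d) (A' : Fin k) (a' : Fin d),
      ⟪Φ A a, Φ A' a'⟫_ℂ = if A = A' then (if a = a' then 1 else 0) else ((d : ℂ))⁻¹ := by
    intro A a A' a'
    have hdn : d ≤ d ^ (k - 1) := by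
      calc d = d ^ 1 := (pow_one d).symm
        _ ≤ d ^ (k - 1) := Nat.pow_le_pow_right (by omega) (by omega)
    have hrestrict : ∀ F : Fin d → ℂ,
        (∑ i : Fin (d ^ (k - 1)), if h : (i : ℕ) < d then F ⟨i, h⟩ else 0) = ∑ i : Fin d, F i := by
      intro F
      rw [Fin.sum_univ_eq_sum_range (fun i => if h : i < d then F ⟨i, h⟩ else 0) (d ^ (k - 1)),
        ← Finset.sum_subset (Finset.range_subset_range.mpr hdn)
          (fun x _ hx => dif_neg (show ¬ x < d by simpa using hx)),
        ← Fin.sum_univ_eq_sum_range (fun i => if h : i < d then F ⟨i, h⟩ else 0) d]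
      exact Finset.sum_congr rfl fun i _ => by simp
    have key : ⟪Φ A a, Φ A' a'⟫_ℂ = ⟪φ A' a', φ A a⟫_ℂ * ⟪φ A a, φ A' a'⟫_ℂ := by
      rw [PiLp.inner_apply, Fintype.sum_prod_type]
      have hterm : ∀ (i : Fin (d ^ (k - 1))) (j : Fin d),
          ⟪Φ A a (i, j), Φ A' a' (i, j)⟫_ℂ
            = if h : (i : ℕ) < d then
                (φ A a ⟨i, h⟩ * (starRingEnd ℂ) (φ A' a' ⟨i, h⟩))
                  * ((starRingEnd ℂ) (φ A a j) * φ A' a' j)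
              else 0 := by
        intro i j
        rw [hΦ, hΦ]
        by_cases h : (i : ℕ) < d
        · rw [dif_pos h, dif_pos h, dif_pos h, RCLike.inner_apply]
          simp only [map_mul, RingHomCompTriple.comp_apply, RingHom.id_apply,
            Complex.conj_conj]
          ring
        · rw [dif_neg h, dif_neg h, dif_neg h, RCLike.inner_apply]
          simp
      calc ∑ i : Fin (d ^ (k - 1)), ∑ j : Fin d, ⟪Φ A a (i, j), Φ A' a' (i, j)⟫_ℂ
          = ∑ i : Fin (d ^ (k - 1)), if h : (i : ℕ) < d then
              (φ A a ⟨i, h⟩ * (starRingEnd ℂ) (φ A' a' ⟨i, h⟩))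
                * ∑ j : Fin d, ((starRingEnd ℂ) (φ A a j) * φ A' a' j)
            else 0 := by
            refine Finset.sum_congr rfl fun i _ => ?_
            rw [Finset.sum_congr rfl fun j _ => hterm i j]
            by_cases h : (i : ℕ) < d
            · simp only [dif_pos h, ← Finset.mul_sum]
            · simp only [dif_neg h, Finset.sum_const_zero]
        _ = (∑ i : Fin d, φ A a i * (starRingEnd ℂ) (φ A' a' i))
              * ∑ j : Fin d, ((starRingEnd ℂ) (φ A a j) * φ A' a' j) := by
            rw [← hrestrict (fun i => φ A a i * (starRingEnd ℂ) (φ A' a' i)), Finset.sum_mul]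
            refine Finset.sum_congr rfl fun i _ => ?_
            by_cases h : (i : ℕ) < d
            · rw [dif_pos h, dif_pos h]
            · rw [dif_neg h, dif_neg h, zero_mul]
        _ = ⟪φ A' a', φ A a⟫_ℂ * ⟪φ A a, φ A' a'⟫_ℂ := by
            rw [PiLp.inner_apply, PiLp.inner_apply]
            congr 1
            exact Finset.sum_congr rfl fun i _ => by rw [RCLike.inner_apply]; ring

    rw [key]
    by_cases hAA : A = A'
    · subst hAA
      have := orthonormal_iff_ite.mp (φ A).orthonormal
      rw [this a a', if_pos rfl]
      by_cases haa : a = a'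
      · subst haa; rw [this a a, if_pos rfl, mul_one]
      · rw [if_neg haa, mul_zero]
    · rw [if_neg hAA, ← inner_conj_symm (φ A a) (φ A' a'), Complex.mul_conj,
        Complex.normSq_eq_norm_sq,
        hMUB A' A (fun h => hAA h.symm) a' a]
      push_cast
      ring
  -- the "pick" function selecting the unique nonzero coordinate
  let A0 : Fin k := ⟨0, by omega⟩
  let sSet : Set (Fin k → Fin d) := {h | ∀ X Y : Fin k, h X ≠ 0 → h Y ≠ 0 → X = Y}
  let pick : (Fin k → Fin d) → Fin k := fun h => if hh : ∃ X, h X ≠ 0 then hh.choose else A0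
  have hpick_ne : ∀ h : Fin k → Fin d, (∃ X, h X ≠ 0) → h (pick h) ≠ 0 := by
    intro h hh
    simp only [pick, dif_pos hh]
    exact hh.choose_spec
  have hzero : ∀ h ∈ sSet, ∀ X, X ≠ pick h → h X = 0 := by
    intro h hs X hX
    by_cases hh : ∃ Y, h Y ≠ 0
    · by_contra hne
      exact hX (hs X (pick h) hne (hpick_ne h hh))
    · push_neg at hh
      exact hh X
  -- √d as a complex scalar
  set c1 : ℂ := ((Real.sqrt d : ℝ) : ℂ) with hc1
  have hc1_mul : c1 * c1 = (d : ℂ) := by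
    rw [hc1, ← Complex.ofReal_mul, Real.mul_self_sqrt (by positivity)]
    norm_num
  have hc1_ne : c1 ≠ 0 := fun h => hd0 (by rw [← hc1_mul, h, zero_mul])
  have hc1_conj : (starRingEnd ℂ) c1⁻¹ = c1⁻¹ := by rw [map_inv₀, hc1, Complex.conj_ofReal]
  let w : (Fin k → Fin d) → EuclideanSpace ℂ (Fin (d ^ (k - 1)) × Fin d) :=
    fun h => c1⁻¹ • Psi ζ Φ (pick h) (h (pick h))
  have hsig : ∀ h ∈ sSet, ∀ h' ∈ sSet,
      ((h (pick h) = h' (pick h') ∧ (pick h = pick h' ∨ h (pick h) = 0)) ↔ h = h') := by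
    intro h hs h' hs'
    constructor
    · rintro ⟨hb, hor⟩
      rcases hor with hp | h0
      · funext X
        by_cases hX : X = pick h
        · rw [hX, hb, hp]
        · rw [hzero h hs X hX, hzero h' hs' X (by rw [← hp]; exact hX)]
      · have h'0 : h' (pick h') = 0 := hb.symm.trans h0
        have hzf : ∀ X, h X = 0 := by
          intro X
          by_cases hX : X = pick h
          · rw [hX]; exact h0
          · exact hzero h hs X hX
        have h'zf : ∀ X, h' X = 0 := by
          intro X
          by_cases hX : X = pick h'
          · rw [hX]; exact h'0
          · exact hzero h' hs' X hX
        funext X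
        rw [hzf X, h'zf X]
    · rintro rfl; exact ⟨rfl, Or.inl rfl⟩
  have hwinner : ∀ h h', ⟪w h, w h'⟫_ℂ =
      (if h (pick h) = h' (pick h') ∧ (pick h = pick h' ∨ h (pick h) = 0) then (1 : ℂ)
        else 0) := by
    intro h h'
    show ⟪c1⁻¹ • _, c1⁻¹ • _⟫_ℂ = _
    rw [inner_smul_left, inner_smul_right, hc1_conj,
      inner_Psi hd hζ habs hIP (pick h) (pick h') (h (pick h)) (h' (pick h'))]
    by_cases hcond : h (pick h) = h' (pick h') ∧ (pick h = pick h' ∨ h (pick h) = 0)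
    · rw [if_pos hcond, if_pos hcond, ← hc1_mul]
      field_simp
    · rw [if_neg hcond, if_neg hcond, mul_zero, mul_zero]
  have horthoW : Orthonormal ℂ (sSet.restrict w) := by
    rw [orthonormal_iff_ite]
    rintro ⟨h, hs⟩ ⟨h', hs'⟩
    change ⟪w h, w h'⟫_ℂ = _
    rw [hwinner h h']
    by_cases he : h = h'
    · rw [if_pos ((hsig h hs h' hs').mpr he), if_pos (Subtype.ext he)]
    · rw [if_neg (fun hc => he ((hsig h hs h' hs').mp hc)),
        if_neg (fun hc => he (congrArg Subtype.val hc))]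
  have hcard : Module.finrank ℂ (EuclideanSpace ℂ (Fin (d ^ (k - 1)) × Fin d))
      = Fintype.card (Fin k → Fin d) := by
    rw [finrank_euclideanSpace]
    simp only [Fintype.card_prod, Fintype.card_fin, Fintype.card_fun]
    rw [← pow_succ]
    congr 1
    omega
  obtain ⟨B, hB⟩ := horthoW.exists_orthonormalBasis_extension_of_card_eq hcard
  have hBo := orthonormal_iff_ite.mp B.orthonormal
  -- completeness relation: Psi A 0 is independent of A
  have hcomp : ∀ (A : Fin k) (i j : Fin d),
      ∑ a : Fin d, (starRingEnd ℂ) (φ A a i) * φ A a j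
        = if (i : ℕ) = (j : ℕ) then 1 else 0 := by
    intro A i j
    have hsum := (φ A).sum_inner_mul_inner (EuclideanSpace.single j (1 : ℂ))
      (EuclideanSpace.single i (1 : ℂ))
    simp only [EuclideanSpace.inner_single_left, EuclideanSpace.inner_single_right, map_one,
      one_mul, mul_one, EuclideanSpace.single_apply] at hsum
    have h2 : ∑ a : Fin d, (starRingEnd ℂ) (φ A a i) * φ A a j
        = ∑ a : Fin d, φ A a j * (starRingEnd ℂ) (φ A a i) :=
      Finset.sum_congr rfl fun a _ => mul_comm _ _
    rw [h2, hsum]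
    by_cases hij : i = j
    · rw [if_pos hij, if_pos (congrArg Fin.val hij), map_one]
    · rw [if_neg hij, if_neg (fun hc => hij (Fin.val_injective hc)), map_zero]
  have hsum_apply : ∀ (g : Fin d → EuclideanSpace ℂ (Fin (d ^ (k - 1)) × Fin d))
      (p : Fin (d ^ (k - 1)) × Fin d), (∑ a : Fin d, g a) p = ∑ a : Fin d, g a p := by
    intro g p
    exact map_sum (PiLp.projₗ (𝕜 := ℂ) 2 (fun _ : Fin (d ^ (k - 1)) × Fin d => ℂ) p) g Finset.univ
  have hV : ∀ A A' : Fin k, Psi ζ Φ A 0 = Psi ζ Φ A' 0 := by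
    have hPsi0 : ∀ A : Fin k, Psi ζ Φ A 0 = ∑ a : Fin d, Φ A a := by
      intro A
      simp [Psi]
    intro A A'
    rw [hPsi0, hPsi0]
    apply PiLp.ext
    rintro ⟨i, j⟩
    rw [hsum_apply, hsum_apply]
    simp only [hΦ]
    by_cases hij : (i : ℕ) < d
    · simp only [dif_pos hij]
      rw [hcomp A ⟨i, hij⟩ j, hcomp A' ⟨i, hij⟩ j]
    · simp only [dif_neg hij, Finset.sum_const_zero]
  -- functions supported at a single coordinate
  let single : Fin k → Fin d → (Fin k → Fin d) := fun A b X => if X = A then b else 0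
  have hsingle_mem : ∀ A b, single A b ∈ sSet := by
    intro A b X Y hX hY
    by_cases hXA : X = A
    · by_cases hYA : Y = A
      · rw [hXA, hYA]
      · exact (hY (if_neg hYA)).elim
    · exact (hX (if_neg hXA)).elim
  have hPsi_w : ∀ A b, Psi ζ Φ A b = c1 • w (single A b) := by
    intro A b
    show Psi ζ Φ A b
      = c1 • (c1⁻¹ • Psi ζ Φ (pick (single A b)) (single A b (pick (single A b))))
    rw [smul_smul, mul_inv_cancel₀ hc1_ne, one_smul]
    by_cases hb : b = 0
    · subst hb
      have hz : ∀ X, single A 0 X = 0 := fun X => ite_self 0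
      rw [hz (pick (single A 0))]
      exact hV A _
    · have hex : ∃ X, single A b X ≠ 0 := ⟨A, by simpa [single] using hb⟩
      have hpA : pick (single A b) = A := by
        have hne := hpick_ne (single A b) hex
        by_contra hc
        exact hne (if_neg hc)
      rw [hpA, show single A b A = b from if_pos rfl]
  have hcoef : ∀ (h : Fin k → Fin d) (A : Fin k) (a : Fin d),
      ⟪B h, Φ A a⟫_ℂ = if h = single A (h A)
        then ((d : ℂ))⁻¹ * (ζ ^ (((h A : ℕ)) * (a : ℕ)))⁻¹ * c1 else 0 := by
    intro h A a
    rw [Phi_expand (Φ := Φ) hd hζ A a, inner_sum]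
    have hterm : ∀ b : Fin d,
        ⟪B h, (((d : ℂ))⁻¹ * (ζ ^ ((b : ℕ) * (a : ℕ)))⁻¹) • Psi ζ Φ A b⟫_ℂ
          = (((d : ℂ))⁻¹ * (ζ ^ ((b : ℕ) * (a : ℕ)))⁻¹ * c1)
              * (if h = single A b then 1 else 0) := by
      intro b
      rw [inner_smul_right, hPsi_w A b, inner_smul_right,
        ← hB (single A b) (hsingle_mem A b), hBo h (single A b)]
      ring
    rw [Finset.sum_congr rfl fun b _ => hterm b]
    by_cases hc : h = single A (h A)
    · rw [if_pos hc, Finset.sum_eq_single (h A)]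
      · rw [if_pos hc, mul_one]
      · intro b _ hb
        rw [if_neg, mul_zero]
        intro hcb
        have hba : h A = b := by rw [hcb]; exact if_pos rfl
        exact hb hba.symm
      · intro hmem; exact (hmem (Finset.mem_univ _)).elim
    · rw [if_neg hc, Finset.sum_eq_zero]
      intro b _
      rw [if_neg, mul_zero]
      intro hcb
      have hba : h A = b := by rw [hcb]; exact if_pos rfl
      exact hc (by rw [hba]; exact hcb)
  -- √(d^k) as a complex scalar
  set c2 : ℂ := ((Real.sqrt (d ^ k) : ℝ) : ℂ) with hc2
  have hdk0 : ((d ^ k : ℕ) : ℂ) ≠ 0 := Nat.cast_ne_zero.mpr (by positivity)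
  have hc2_mul : c2 * c2 = ((d ^ k : ℕ) : ℂ) := by
    rw [hc2, ← Complex.ofReal_mul, Real.mul_self_sqrt (by positivity)]
    push_cast
    ring
  have hc2_ne : c2 ≠ 0 := fun h => hdk0 (by rw [← hc2_mul, h, zero_mul])
  have hc2_conj : (starRingEnd ℂ) c2⁻¹ = c2⁻¹ := by rw [map_inv₀, hc2, Complex.conj_ofReal]
  have hconj_pow : ∀ mm : ℕ, (starRingEnd ℂ) ((ζ ^ mm)⁻¹) = ζ ^ mm := by
    intro mm; rw [map_inv₀, habs, inv_inv]
  -- the Fourier-transformed family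
  let e' : (Fin k → Fin d) → EuclideanSpace ℂ (Fin (d ^ (k - 1)) × Fin d) :=
    fun I => c2⁻¹ • ∑ h : Fin k → Fin d, (ζ ^ (∑ X : Fin k, (h X : ℕ) * (I X : ℕ)))⁻¹ • B h
  have hchar : ∀ I I' : Fin k → Fin d,
      (∑ h : Fin k → Fin d, ζ ^ (∑ X : Fin k, (h X : ℕ) * (I X : ℕ))
          * (ζ ^ (∑ X : Fin k, (h X : ℕ) * (I' X : ℕ)))⁻¹)
        = if I = I' then ((d ^ k : ℕ) : ℂ) else 0 := by
    intro I I'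
    have hterm : ∀ h : Fin k → Fin d,
        ζ ^ (∑ X : Fin k, (h X : ℕ) * (I X : ℕ))
            * (ζ ^ (∑ X : Fin k, (h X : ℕ) * (I' X : ℕ)))⁻¹
          = ∏ X : Fin k,
              (ζ ^ ((h X : ℕ) * (I X : ℕ)) * (ζ ^ ((h X : ℕ) * (I' X : ℕ)))⁻¹) := by
      intro h
      rw [← Finset.prod_pow_eq_pow_sum, ← Finset.prod_pow_eq_pow_sum,
        ← Finset.prod_inv_distrib, ← Finset.prod_mul_distrib]
    rw [Finset.sum_congr rfl fun h _ => hterm h, ← Fintype.piFinset_univ,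
      Finset.sum_prod_piFinset (Finset.univ : Finset (Fin d))
        (fun X b => ζ ^ ((b : ℕ) * (I X : ℕ)) * (ζ ^ ((b : ℕ) * (I' X : ℕ)))⁻¹)]
    have hfac : ∀ X : Fin k,
        (∑ b : Fin d, ζ ^ ((b : ℕ) * (I X : ℕ)) * (ζ ^ ((b : ℕ) * (I' X : ℕ)))⁻¹)
          = if I X = I' X then (d : ℂ) else 0 := by
      intro X
      rw [← cs' hd hζ (I X) (I' X)]
      exact Finset.sum_congr rfl fun b _ => by
        rw [mul_comm (b : ℕ) ((I X : ℕ)), mul_comm (b : ℕ) ((I' X : ℕ))]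
    rw [Finset.prod_congr rfl fun X _ => hfac X]
    by_cases hII : I = I'
    · subst hII
      simp only [if_pos rfl, Finset.prod_const, Finset.card_univ, Fintype.card_fin]
      push_cast
      ring
    · obtain ⟨X, hX⟩ := Function.ne_iff.mp hII
      rw [if_neg hII]
      exact Finset.prod_eq_zero (Finset.mem_univ X) (if_neg hX)
  have hdouble : ∀ I I' : Fin k → Fin d,
      ⟪∑ h : Fin k → Fin d, (ζ ^ (∑ X : Fin k, (h X : ℕ) * (I X : ℕ)))⁻¹ • B h,
        ∑ h : Fin k → Fin d, (ζ ^ (∑ X : Fin k, (h X : ℕ) * (I' X : ℕ)))⁻¹ • B h⟫_ℂ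
      = ∑ h : Fin k → Fin d, ζ ^ (∑ X : Fin k, (h X : ℕ) * (I X : ℕ))
          * (ζ ^ (∑ X : Fin k, (h X : ℕ) * (I' X : ℕ)))⁻¹ := by
    intro I I'
    rw [sum_inner]
    refine Finset.sum_congr rfl fun h _ => ?_
    rw [inner_smul_left, hconj_pow, inner_sum]
    have h2 : ∀ h' : Fin k → Fin d,
        ⟪B h, (ζ ^ (∑ X : Fin k, (h' X : ℕ) * (I' X : ℕ)))⁻¹ • B h'⟫_ℂ
          = if h = h' then (ζ ^ (∑ X : Fin k, (h' X : ℕ) * (I' X : ℕ)))⁻¹ else 0 := by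
      intro h'
      rw [inner_smul_right, hBo h h']
      by_cases hh : h = h'
      · rw [if_pos hh, if_pos hh, mul_one]
      · rw [if_neg hh, if_neg hh, mul_zero]
    rw [Finset.sum_congr rfl fun h' _ => h2 h', Finset.sum_ite_eq Finset.univ h
      (fun h' => (ζ ^ (∑ X : Fin k, (h' X : ℕ) * (I' X : ℕ)))⁻¹), if_pos (Finset.mem_univ h)]
  have horthoE : Orthonormal ℂ (Set.univ.restrict e') := by
    rw [orthonormal_iff_ite]
    rintro ⟨I, -⟩ ⟨I', -⟩
    change ⟪e' I, e' I'⟫_ℂ = _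
    show ⟪c2⁻¹ • _, c2⁻¹ • _⟫_ℂ = _
    rw [inner_smul_left, inner_smul_right, hc2_conj, hdouble I I', hchar I I']
    by_cases hII : I = I'
    · rw [if_pos hII, if_pos (Subtype.ext hII), ← hc2_mul]
      field_simp
    · rw [if_neg hII, if_neg (fun hc => hII (congrArg Subtype.val hc)), mul_zero, mul_zero]
  obtain ⟨E, hE⟩ := horthoE.exists_orthonormalBasis_extension_of_card_eq hcard
  -- the survival property
  have hfinal : ∀ (J : Fin k → Fin d) (A : Fin k) (a : Fin d),
      J A ≠ a → ⟪e' J, Φ A a⟫_ℂ = 0 := by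
    intro J A a hne
    show ⟪c2⁻¹ • ∑ h : Fin k → Fin d, (ζ ^ (∑ X : Fin k, (h X : ℕ) * (J X : ℕ)))⁻¹ • B h,
      Φ A a⟫_ℂ = 0
    rw [inner_smul_left, hc2_conj, sum_inner]
    have hterm : ∀ h : Fin k → Fin d,
        ⟪(ζ ^ (∑ X : Fin k, (h X : ℕ) * (J X : ℕ)))⁻¹ • B h, Φ A a⟫_ℂ
          = ∑ b : Fin d, (if h = single A b then
              ζ ^ ((b : ℕ) * (J A : ℕ))
                * (((d : ℂ))⁻¹ * (ζ ^ ((b : ℕ) * (a : ℕ)))⁻¹ * c1) else 0) := by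
      intro h
      rw [inner_smul_left, hconj_pow, hcoef h A a]
      by_cases hc : h = single A (h A)
      · rw [if_pos hc]
        have hm : ∑ X : Fin k, (h X : ℕ) * (J X : ℕ) = (h A : ℕ) * (J A : ℕ) := by
          rw [Finset.sum_eq_single A]
          · intro X _ hX
            have hzX : h X = 0 := by rw [hc]; exact if_neg hX
            rw [hzX]
            simp
          · intro hmem; exact (hmem (Finset.mem_univ _)).elim
        have hsum : (∑ b : Fin d, (if h = single A b then
              ζ ^ ((b : ℕ) * (J A : ℕ))
                * (((d : ℂ))⁻¹ * (ζ ^ ((b : ℕ) * (a : ℕ)))⁻¹ * c1) else 0))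
            = ζ ^ (((h A) : ℕ) * (J A : ℕ))
                * (((d : ℂ))⁻¹ * (ζ ^ (((h A) : ℕ) * (a : ℕ)))⁻¹ * c1) := by
          rw [Finset.sum_eq_single (h A)]
          · rw [if_pos hc]
          · intro b _ hb
            rw [if_neg]
            intro hcb
            have hba : h A = b := by rw [hcb]; exact if_pos rfl
            exact hb hba.symm
          · intro hmem; exact (hmem (Finset.mem_univ _)).elim
        rw [hsum, hm]
      · rw [if_neg hc, mul_zero, Finset.sum_eq_zero]
        intro b _
        rw [if_neg]
        intro hcb
        have hba : h A = b := by rw [hcb]; exact if_pos rfl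
        exact hc (by rw [hba]; exact hcb)
    rw [Finset.sum_congr rfl fun h _ => hterm h, Finset.sum_comm,
      Finset.sum_congr rfl (fun b _ => Finset.sum_ite_eq' Finset.univ (single A b) _)]
    simp only [Finset.mem_univ, if_true]
    have hre : (∑ b : Fin d, ζ ^ ((b : ℕ) * (J A : ℕ))
          * (((d : ℂ))⁻¹ * (ζ ^ ((b : ℕ) * (a : ℕ)))⁻¹ * c1))
        = (∑ b : Fin d, ζ ^ ((J A : ℕ) * (b : ℕ)) * (ζ ^ ((a : ℕ) * (b : ℕ)))⁻¹)
            * (((d : ℂ))⁻¹ * c1) := by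
      rw [Finset.sum_mul]
      exact Finset.sum_congr rfl fun b _ => by
        rw [mul_comm (b : ℕ) ((J A : ℕ)), mul_comm (b : ℕ) (a : ℕ)]
        ring
    rw [hre, cs' hd hζ (J A) a, if_neg hne]
    ring
  refine ⟨fun I => finFunctionFinEquiv.symm I, E.reindex finFunctionFinEquiv, ?_⟩
  intro I A a hne
  rw [OrthonormalBasis.reindex_apply, hE _ (Set.mem_univ _)]
  exact hfinal (finFunctionFinEquiv.symm I) A a hne
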